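/- Under the multiplicative effects assumption replacing no-interaction, the treatment effect without the confounder is identified as τ^DiDC / τ₀^RD + 1 = E[Y₁(0,1) − Y₁(0,0) | Z = z₀], provided τ₀^RD ≠ 0. -/

import Mathlib

/-- Under the multiplicative effects assumption (replacing no-interaction),
the treatment effect without the confounder is identified as
τ^DiDC / τ₀^RD + 1 = a(0,1) − a(0,0), provided τ₀^RD ≠ 0. -/
theorem didc_multiplicative_identification
    (a11 a10 a01 a00 b10 b00 τDiDC τ0RD : ℝ)
    (hτ : τDiDC = (a11 - a00) - (b10 - b00))
    (htimeinv : b10 - b00 = a10 - a00)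
    (hmult : a11 - a00 = (a01 - a00) * (a10 - a00))
    (hτ0 : τ0RD = b10 - b00)
    (hτ0ne : τ0RD ≠ 0) :
    τDiDC / τ0RD + 1 = a01 - a00 := by
  subst hτ hτ0
  rw [htimeinv] at *
  rw [hmult]
  field_simp
  ring
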